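/- Let ρ be a congruence on M_n (n ≥ 1). If the element d is invertible in the quotient M_n/ρ (i.e., there is x with [d]x = x[d] = 1), then ρ = M_n × M_n. -/

import Mathlib

inductive Letter | a | b | c | d | z
deriving DecidableEq

abbrev W := FreeMonoid Letter
def A : W := FreeMonoid.of .a
def B : W := FreeMonoid.of .b
def C : W := FreeMonoid.of .c
def D : W := FreeMonoid.of .d
def Z : W := FreeMonoid.of .z

/-- The defining relations of `M n`, with the zero realized by the letter `z`. -/
def relM (n : ℕ) : W → W → Prop := fun x y =>
  (x = A ^ n * B ∧ y = Z) ∨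
  (x = A * C ∧ y = 1) ∨ (x = D * B ∧ y = 1) ∨ (x = D * C ∧ y = 1) ∨
  (∃ k, 1 ≤ k ∧ k ≤ n - 1 ∧ x = D * A ^ k * B ∧ y = 1) ∨
  (∃ l : Letter, x = FreeMonoid.of l * Z ∧ y = Z) ∨
  (∃ l : Letter, x = Z * FreeMonoid.of l ∧ y = Z)

def Mcon (n : ℕ) : Con W := conGen (relM n)

/-- The monoid `M n = Mon⟨a,b,c,d : aⁿb=0, ac=1, db=1, dc=1, daᵏb=1 (1 ≤ k ≤ n-1)⟩`. -/
abbrev M (n : ℕ) := (Mcon n).Quotient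

/-- If the image of `d` is invertible in `M n / ρ`, then `ρ` is the full congruence. -/
theorem stmt9 (n : ℕ) (hn : 1 ≤ n) (ρ : Con (M n))
    (h : ∃ x : ρ.Quotient, ((D : M n) : ρ.Quotient) * x = 1 ∧ x * ((D : M n) : ρ.Quotient) = 1) :
    ρ = ⊤ := by
  obtain ⟨x, hdx, hxd⟩ := h
  set π : W →* ρ.Quotient := ρ.mk'.comp (Con.mk' (Mcon n)) with hπ
  have hrel : ∀ u v : W, relM n u v → π u = π v := by
    intro u v huv
    have h1 : Mcon n u v := ConGen.Rel.of _ _ huv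
    show ρ.mk' ((Mcon n).mk' u) = ρ.mk' ((Mcon n).mk' v)
    exact congrArg _ ((Con.eq _).mpr h1)
  have hD : π D = ((D : M n) : ρ.Quotient) := rfl
  -- relations
  have hdb : π D * π B = 1 := by
    have := hrel (D * B) 1 (Or.inr (Or.inr (Or.inl ⟨rfl, rfl⟩)))
    simpa using this
  have hac : π A * π C = 1 := by
    have := hrel (A * C) 1 (Or.inr (Or.inl ⟨rfl, rfl⟩))
    simpa using this
  have hanb : π A ^ n * π B = π Z := by
    have := hrel (A ^ n * B) Z (Or.inl ⟨rfl, rfl⟩)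
    simpa using this
  have hlz : ∀ l : Letter, π (FreeMonoid.of l) * π Z = π Z := by
    intro l
    have := hrel (FreeMonoid.of l * Z) Z
      (Or.inr (Or.inr (Or.inr (Or.inr (Or.inr (Or.inl ⟨l, rfl, rfl⟩))))))
    simpa using this
  have hzl : ∀ l : Letter, π Z * π (FreeMonoid.of l) = π Z := by
    intro l
    have := hrel (Z * FreeMonoid.of l) Z
      (Or.inr (Or.inr (Or.inr (Or.inr (Or.inr (Or.inr ⟨l, rfl, rfl⟩))))))
    simpa using this
  -- absorption
  have hzw : ∀ w : W, π Z * π w = π Z := by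
    intro w
    induction w using FreeMonoid.recOn with
    | one => simp
    | of_mul l ws ih =>
      rw [map_mul, ← mul_assoc, hzl l, ih]
  have hwz : ∀ w : W, π w * π Z = π Z := by
    intro w
    induction w using FreeMonoid.recOn with
    | one => simp
    | of_mul l ws ih =>
      rw [map_mul, mul_assoc, ih, hlz l]
  -- b is a two-sided inverse of d
  have hxb : x = π B := by
    calc x = x * (π D * π B) := by rw [hdb, mul_one]
    _ = (x * π D) * π B := by rw [mul_assoc]
    _ = π B := by rw [hD, hxd, one_mul]
  have hbd : π B * π D = 1 := by rw [← hxb, hD]; exact hxd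
  -- aⁿ = z
  have han : π A ^ n = π Z := by
    calc π A ^ n = π A ^ n * (π B * π D) := by rw [hbd, mul_one]
    _ = (π A ^ n * π B) * π D := by rw [mul_assoc]
    _ = π Z * π D := by rw [hanb]
    _ = π Z := hzw D
  -- aⁿcⁿ = 1
  have hacn : ∀ k : ℕ, π A ^ k * π C ^ k = 1 := by
    intro k
    induction k with
    | zero => simp
    | succ k ih =>
      calc π A ^ (k + 1) * π C ^ (k + 1)
          = π A ^ k * ((π A * π C) * π C ^ k) := by
            rw [pow_succ, pow_succ', mul_assoc, mul_assoc]
      _ = π A ^ k * π C ^ k := by rw [hac, one_mul]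
      _ = 1 := ih
  have hz1 : π Z = 1 := by
    have h1 : (1 : ρ.Quotient) = π Z * π C ^ n := by rw [← han, hacn n]
    rw [← map_pow, hzw (C ^ n)] at h1
    exact h1.symm
  have hall : ∀ w : W, π w = 1 := by
    intro w
    calc π w = π w * π Z := by rw [hz1, mul_one]
    _ = π Z := hwz w
    _ = 1 := hz1
  have hall' : ∀ m : M n, (m : ρ.Quotient) = 1 := by
    intro m
    induction m using Con.induction_on with
    | H w => exact hall w
  rw [eq_top_iff, Con.le_def]
  intro a b _
  have : (a : ρ.Quotient) = (b : ρ.Quotient) := by rw [hall' a, hall' b]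
  exact (Con.eq ρ).mp this
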